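/- arXiv:1401.5777 — 2 statements merged into one kernel-verified Lean document; each statement's English description precedes it below -/
import Mathlib

section
/- Let α > 0, θ_0 ∈ ℝ with θ_0 ≠ 0, and a, b ∈ ℝ with a² + b² > 0. Define the measure ν_0 on (0,∞) by ν_0(dx) = [1 + a cos(θ_0 log x) + b sin(θ_0 log x)] α x^{-(α+1)} dx (assuming a² + b² ≤ 1 so the density is nonnegative). Then the function t ↦ t^α ν_0((t,∞)) does not converge as t → ∞. In particular, ν_0 is not regularly varying with index α. -/
open MeasureTheory Set Filter

/-- The measure `ν₀(dx) = [1 + a cos(θ₀ log x) + b sin(θ₀ log x)] α x^{-(α+1)} dx`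
with `θ₀ ≠ 0` and `0 < a² + b² ≤ 1` has oscillating normalized tails:
`t ↦ t^α ν₀((t,∞))` does not converge as `t → ∞`; in particular `ν₀` is not
regularly varying with index `α`. -/
theorem stmt_9 (α θ₀ a b : ℝ) (hα : 0 < α) (hθ₀ : θ₀ ≠ 0)
    (hab0 : 0 < a ^ 2 + b ^ 2) (hab1 : a ^ 2 + b ^ 2 ≤ 1)
    (ν₀ : Measure ℝ)
    (hν₀ : ν₀ = (volume.restrict (Ioi (0:ℝ))).withDensity
      (fun x => ENNReal.ofReal
        ((1 + a * Real.cos (θ₀ * Real.log x) + b * Real.sin (θ₀ * Real.log x)) *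
          (α * x ^ (-(α + 1)))))) :
    ¬ ∃ L : ℝ, Tendsto (fun t : ℝ => t ^ α * (ν₀ (Ioi t)).toReal) atTop (nhds L) := by
  have hD : (α ^ 2 + θ₀ ^ 2) ≠ 0 := by positivity
  obtain ⟨c, d, key1, key2⟩ :
      ∃ c d : ℝ, α * c - θ₀ * d = α * a ∧ α * d + θ₀ * c = α * b :=
    ⟨α * (α * a + θ₀ * b) / (α ^ 2 + θ₀ ^ 2), α * (α * b - θ₀ * a) / (α ^ 2 + θ₀ ^ 2),
      by field_simp; ring, by field_simp; ring⟩
  set f : ℝ → ℝ := fun x =>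
    (1 + a * Real.cos (θ₀ * Real.log x) + b * Real.sin (θ₀ * Real.log x)) *
      (α * x ^ (-(α + 1))) with hfdef
  set g : ℝ → ℝ := fun x =>
    -(x ^ (-α) * (1 + c * Real.cos (θ₀ * Real.log x) + d * Real.sin (θ₀ * Real.log x)))
    with hgdef
  -- derivative of g is f on (0, ∞)
  have hderiv : ∀ x : ℝ, 0 < x → HasDerivAt g (f x) x := by
    intro x hx
    have hlog : HasDerivAt (fun y : ℝ => θ₀ * Real.log y) (θ₀ * x⁻¹) x :=
      (Real.hasDerivAt_log hx.ne').const_mul θ₀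
    have hcos : HasDerivAt (fun y : ℝ => Real.cos (θ₀ * Real.log y))
        (-Real.sin (θ₀ * Real.log x) * (θ₀ * x⁻¹)) x :=
      HasDerivAt.comp (h₂ := Real.cos) x (Real.hasDerivAt_cos (θ₀ * Real.log x)) hlog
    have hsin : HasDerivAt (fun y : ℝ => Real.sin (θ₀ * Real.log y))
        (Real.cos (θ₀ * Real.log x) * (θ₀ * x⁻¹)) x :=
      HasDerivAt.comp (h₂ := Real.sin) x (Real.hasDerivAt_sin (θ₀ * Real.log x)) hlog
    have hq : HasDerivAt (fun y : ℝ =>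
        1 + c * Real.cos (θ₀ * Real.log y) + d * Real.sin (θ₀ * Real.log y))
        (c * (-Real.sin (θ₀ * Real.log x) * (θ₀ * x⁻¹)) +
          d * (Real.cos (θ₀ * Real.log x) * (θ₀ * x⁻¹))) x := by
      refine (((hasDerivAt_const x (1:ℝ)).add (hcos.const_mul c)).add
        (hsin.const_mul d)).congr_deriv ?_
      ring
    have hp : HasDerivAt (fun y : ℝ => y ^ (-α)) (-α * x ^ (-α - 1)) x := by
      simpa using Real.hasDerivAt_rpow_const (p := -α) (Or.inl hx.ne')
    have hmain := ((hp.mul hq).neg)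
    refine hmain.congr_deriv ?_
    symm
    have hX1 : x ^ (-α - 1) = x ^ (-(α + 1)) := by ring_nf
    have hX2 : x ^ (-α) * x⁻¹ = x ^ (-(α + 1)) := by
      rw [← Real.rpow_neg_one x, ← Real.rpow_add hx]; ring_nf
    simp only [hfdef]
    rw [hX1]
    set C := Real.cos (θ₀ * Real.log x)
    set S := Real.sin (θ₀ * Real.log x)
    have expand : x ^ (-α) * (c * (-S * (θ₀ * x⁻¹)) + d * (C * (θ₀ * x⁻¹)))
        = x ^ (-(α + 1)) * (c * (-S * θ₀) + d * (C * θ₀)) := by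
      rw [← hX2]; ring
    rw [mul_comm (x ^ (-α)) _] at expand ⊢
    -- goal: f x = -((-α * x^(-(α+1))) * q + ...)
    rw [show ∀ u v : ℝ, -(-α * x ^ (-(α+1)) * u + v) = α * x ^ (-(α+1)) * u - v by
      intro u v; ring]
    rw [expand]
    linear_combination (-(x ^ (-(α + 1)) * C)) * key1 + (-(x ^ (-(α + 1)) * S)) * key2
  -- g tends to 0 at infinity
  have hg0 : Tendsto g atTop (nhds 0) := by
    have hb : ∀ᶠ x : ℝ in atTop, ‖g x‖ ≤ x ^ (-α) * (1 + |c| + |d|) := by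
      filter_upwards [eventually_ge_atTop (1:ℝ)] with x hx
      have hx0 : (0:ℝ) ≤ x := le_trans zero_le_one hx
      have h1 : ‖g x‖ = x ^ (-α) *
          |1 + c * Real.cos (θ₀ * Real.log x) + d * Real.sin (θ₀ * Real.log x)| := by
        rw [hgdef]
        simp only [norm_neg, Real.norm_eq_abs, abs_mul,
          abs_of_nonneg (Real.rpow_nonneg hx0 (-α))]
      rw [h1]
      refine mul_le_mul_of_nonneg_left ?_ (Real.rpow_nonneg hx0 (-α))
      have := Real.abs_cos_le_one (θ₀ * Real.log x)
      have := Real.abs_sin_le_one (θ₀ * Real.log x)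
      calc |1 + c * Real.cos (θ₀ * Real.log x) + d * Real.sin (θ₀ * Real.log x)|
          ≤ |1 + c * Real.cos (θ₀ * Real.log x)| + |d * Real.sin (θ₀ * Real.log x)| :=
            abs_add_le _ _
        _ ≤ (|(1:ℝ)| + |c * Real.cos (θ₀ * Real.log x)|) + |d * Real.sin (θ₀ * Real.log x)| := by
            gcongr; exact abs_add_le _ _
        _ ≤ 1 + |c| + |d| := by
            rw [abs_one, abs_mul, abs_mul]
            have h2 : |c| * |Real.cos (θ₀ * Real.log x)| ≤ |c| :=
              mul_le_of_le_one_right (abs_nonneg c) (Real.abs_cos_le_one _)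
            have h3 : |d| * |Real.sin (θ₀ * Real.log x)| ≤ |d| :=
              mul_le_of_le_one_right (abs_nonneg d) (Real.abs_sin_le_one _)
            linarith
    have hlim : Tendsto (fun x : ℝ => x ^ (-α) * (1 + |c| + |d|)) atTop (nhds 0) := by
      simpa using (tendsto_rpow_neg_atTop hα).mul_const (1 + |c| + |d|)
    exact squeeze_zero_norm' hb hlim
  -- nonnegativity of f on (0, ∞)
  have hfpos : ∀ x : ℝ, 0 < x → 0 ≤ f x := by
    intro x hx
    have hC := Real.sin_sq_add_cos_sq (θ₀ * Real.log x)
    have h1 : 0 ≤ 1 + a * Real.cos (θ₀ * Real.log x) + b * Real.sin (θ₀ * Real.log x) := by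
      nlinarith [sq_nonneg (a * Real.sin (θ₀ * Real.log x) - b * Real.cos (θ₀ * Real.log x)),
        sq_nonneg (1 + a * Real.cos (θ₀ * Real.log x) + b * Real.sin (θ₀ * Real.log x))]
    have h2 : 0 ≤ α * x ^ (-(α + 1)) := by positivity
    exact mul_nonneg h1 h2
  -- tail formula
  have main : ∀ t : ℝ, 0 < t → (ν₀ (Ioi t)).toReal =
      t ^ (-α) * (1 + c * Real.cos (θ₀ * Real.log t) + d * Real.sin (θ₀ * Real.log t)) := by
    intro t ht
    have hderiv' : ∀ x ∈ Ici t, HasDerivAt g (f x) x :=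
      fun x hx => hderiv x (lt_of_lt_of_le ht hx)
    have hfpos' : ∀ x ∈ Ioi t, 0 ≤ f x := fun x hx => hfpos x (lt_trans ht hx)
    have hint : IntegrableOn f (Ioi t) :=
      integrableOn_Ioi_deriv_of_nonneg' hderiv' hfpos' hg0
    have hval : ∫ x in Ioi t, f x = 0 - g t :=
      integral_Ioi_of_hasDerivAt_of_nonneg' hderiv' hfpos' hg0
    have hmeas : ν₀ (Ioi t) = ∫⁻ x in Ioi t, ENNReal.ofReal (f x) := by
      rw [hν₀, withDensity_apply _ measurableSet_Ioi,
        Measure.restrict_restrict measurableSet_Ioi,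
        inter_eq_left.mpr (Ioi_subset_Ioi ht.le)]
    have hae : 0 ≤ᵐ[volume.restrict (Ioi t)] f :=
      (ae_restrict_iff' measurableSet_Ioi).mpr (ae_of_all _ hfpos')
    have hofReal : ENNReal.ofReal (∫ x in Ioi t, f x) = ∫⁻ x in Ioi t, ENNReal.ofReal (f x) :=
      ofReal_integral_eq_lintegral_ofReal hint hae
    rw [hmeas, ← hofReal, hval, ENNReal.toReal_ofReal]
    · rw [hgdef]; ring
    · rw [← hval]
      exact setIntegral_nonneg measurableSet_Ioi hfpos'
  -- suppose convergence
  rintro ⟨L, hL⟩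
  have hF : Tendsto (fun t : ℝ =>
      1 + c * Real.cos (θ₀ * Real.log t) + d * Real.sin (θ₀ * Real.log t)) atTop (nhds L) := by
    apply hL.congr'
    filter_upwards [eventually_gt_atTop (0:ℝ)] with t ht
    rw [main t ht, ← mul_assoc, ← Real.rpow_add ht]
    simp
  -- every phase value equals L
  have phase : ∀ ψ : ℝ, 1 + c * Real.cos ψ + d * Real.sin ψ = L := by
    intro ψ
    set k : ℕ → ℤ := fun n => if 0 < θ₀ then (n : ℤ) else -(n : ℤ) with hkdef
    set s : ℕ → ℝ := fun n => (ψ + (k n : ℝ) * (2 * Real.pi)) / θ₀ with hsdef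
    have hs : Tendsto s atTop atTop := by
      have hseq : s = fun n : ℕ => ψ / θ₀ + (n : ℝ) * (2 * Real.pi / |θ₀|) := by
        funext n
        rcases lt_or_gt_of_ne hθ₀ with h | h
        · have habs : |θ₀| = -θ₀ := abs_of_neg h
          simp only [hsdef, hkdef, if_neg (not_lt.mpr h.le), habs]
          push_cast
          rw [div_neg]
          ring
        · have habs : |θ₀| = θ₀ := abs_of_pos h
          simp only [hsdef, hkdef, if_pos h, habs]
          push_cast
          ring
      rw [hseq]
      have hpos : 0 < 2 * Real.pi / |θ₀| := by
        have := Real.pi_pos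
        have : (0:ℝ) < |θ₀| := abs_pos.mpr hθ₀
        positivity
      exact tendsto_atTop_add_const_left _ _
        (tendsto_natCast_atTop_atTop.atTop_mul_const hpos)
    have hte : Tendsto (fun n => Real.exp (s n)) atTop atTop :=
      Real.tendsto_exp_atTop.comp hs
    have hcomp := hF.comp hte
    have hconst : (fun n => (fun t : ℝ =>
        1 + c * Real.cos (θ₀ * Real.log t) + d * Real.sin (θ₀ * Real.log t)) (Real.exp (s n)))
        = fun _ : ℕ => 1 + c * Real.cos ψ + d * Real.sin ψ := by
      funext n
      simp only [Real.log_exp]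
      have hθs : θ₀ * s n = ψ + (k n : ℝ) * (2 * Real.pi) := by
        rw [hsdef]; field_simp
      rw [hθs, Real.cos_add_int_mul_two_pi, Real.sin_add_int_mul_two_pi]
    rw [show ((fun t : ℝ =>
        1 + c * Real.cos (θ₀ * Real.log t) + d * Real.sin (θ₀ * Real.log t)) ∘
        fun n => Real.exp (s n)) = fun _ : ℕ => 1 + c * Real.cos ψ + d * Real.sin ψ
      from hconst] at hcomp
    exact tendsto_nhds_unique tendsto_const_nhds hcomp
  have h1 := phase 0
  have h2 := phase Real.pi
  have h3 := phase (Real.pi / 2)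
  have h4 := phase (-(Real.pi / 2))
  simp [Real.cos_pi, Real.sin_pi, Real.cos_pi_div_two, Real.sin_pi_div_two] at h1 h2 h3 h4
  have hc : c = 0 := by linarith
  have hd : d = 0 := by linarith
  rw [hc, hd] at key1 key2
  have ha : a = 0 := by
    have : α * a = 0 := by linarith
    exact (mul_eq_zero.mp this).resolve_left hα.ne'
  have hb : b = 0 := by
    have : α * b = 0 := by linarith
    exact (mul_eq_zero.mp this).resolve_left hα.ne'
  rw [ha, hb] at hab0
  norm_num at hab0
end

section
/- Let ν and ρ be σ-finite measures on ℝ^d with sup-norm ‖·‖, and suppose δ, θ > 0 satisfy ρ({x : |x_j| ≥ θ}) ≥ δ for every j = 1,…,d. Then for every s > 0, ν({z : ‖z‖ > s}) ≤ (d/δ) · (ν ⊛ ρ)({w : ‖w‖ > θ s / d}). -/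
open MeasureTheory Set
open scoped ENNReal

/-- If `ρ({|x_j| ≥ θ}) ≥ δ` for every coordinate `j`, then
`ν({‖z‖ > s}) ≤ (d/δ) (ν ⊛ ρ)({‖w‖ > θs/d})` (sup-norm on `ℝ^d`). -/
theorem stmt_11 (d : ℕ) (hd : 1 ≤ d)
    (ν ρ : Measure (Fin d → ℝ)) [SigmaFinite ν] [SigmaFinite ρ]
    (δ θ : ℝ) (hδ : 0 < δ) (hθ : 0 < θ)
    (hρ : ∀ j : Fin d, ENNReal.ofReal δ ≤ ρ {x | θ ≤ |x j|}) :
    ∀ s > (0:ℝ),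
      ν {z | s < ‖z‖} ≤
        ENNReal.ofReal ((d : ℝ) / δ) *
          ∫⁻ x, ν ((fun z => fun k => x k * z k) ⁻¹' {w | θ * s / d < ‖w‖}) ∂ρ := by
  intro s hs
  set A : Set (Fin d → ℝ) := {w | θ * s / d < ‖w‖} with hA
  set f : (Fin d → ℝ) → ℝ≥0∞ := fun x => ν ((fun z => fun k => x k * z k) ⁻¹' A) with hf
  have hd' : (1:ℝ) ≤ (d:ℝ) := by exact_mod_cast hd
  have key : ∀ j : Fin d, ENNReal.ofReal δ * ν {z | s < |z j|} ≤ ∫⁻ x, f x ∂ρ := by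
    intro j
    have hS : MeasurableSet {x : Fin d → ℝ | θ ≤ |x j|} := by
      apply measurableSet_le <;> measurability
    calc ENNReal.ofReal δ * ν {z | s < |z j|}
        ≤ ρ {x | θ ≤ |x j|} * ν {z | s < |z j|} := mul_le_mul_left (hρ j) _
      _ = ∫⁻ x, ({x : Fin d → ℝ | θ ≤ |x j|}).indicator
            (fun _ => ν {z | s < |z j|}) x ∂ρ := by
          rw [lintegral_indicator hS, setLIntegral_const, mul_comm]
      _ ≤ ∫⁻ x, f x ∂ρ := by
          refine lintegral_mono fun x => ?_
          by_cases hx : x ∈ {x : Fin d → ℝ | θ ≤ |x j|}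
          · rw [Set.indicator_of_mem hx]
            refine measure_mono fun z hz => ?_
            simp only [Set.mem_setOf_eq] at hz hx
            simp only [Set.mem_preimage, hA, Set.mem_setOf_eq]
            have h2 : θ * s < |x j * z j| := by
              rw [abs_mul]
              nlinarith [abs_nonneg (z j)]
            have h3 : |x j * z j| ≤ ‖fun k => x k * z k‖ := by
              have := norm_le_pi_norm (fun k => x k * z k) j
              simpa [Real.norm_eq_abs, abs_mul] using this
            have h1 : θ * s / d ≤ θ * s :=
              div_le_self (by positivity) hd'
            linarith
          · rw [Set.indicator_of_notMem hx]; exact zero_le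
  have subset : {z : Fin d → ℝ | s < ‖z‖} ⊆ ⋃ j, {z : Fin d → ℝ | s < |z j|} := by
    intro z hz
    simp only [Set.mem_setOf_eq] at hz
    by_contra h
    simp only [Set.mem_iUnion, Set.mem_setOf_eq, not_exists, not_lt] at h
    have : ‖z‖ ≤ s := (pi_norm_le_iff_of_nonneg hs.le).2 fun i => by
      simpa [Real.norm_eq_abs] using h i
    linarith
  have step : ν {z | s < ‖z‖} ≤ ∑ j : Fin d, ν {z | s < |z j|} :=
    (measure_mono subset).trans (measure_iUnion_fintype_le _ _)
  have main : ENNReal.ofReal δ * ν {z | s < ‖z‖} ≤ (d : ℝ≥0∞) * ∫⁻ x, f x ∂ρ := by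
    calc ENNReal.ofReal δ * ν {z | s < ‖z‖}
        ≤ ENNReal.ofReal δ * ∑ j : Fin d, ν {z | s < |z j|} := mul_le_mul_right step _
      _ = ∑ j : Fin d, ENNReal.ofReal δ * ν {z | s < |z j|} := Finset.mul_sum _ _ _
      _ ≤ ∑ _j : Fin d, ∫⁻ x, f x ∂ρ := Finset.sum_le_sum fun j _ => key j
      _ = (d : ℝ≥0∞) * ∫⁻ x, f x ∂ρ := by simp [Finset.sum_const, nsmul_eq_mul]
  have hδ0 : ENNReal.ofReal δ ≠ 0 := by simp [hδ, ENNReal.ofReal_pos]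
  have hδtop : ENNReal.ofReal δ ≠ ⊤ := ENNReal.ofReal_ne_top
  have main' : ν {z | s < ‖z‖} * ENNReal.ofReal δ ≤ (d : ℝ≥0∞) * ∫⁻ x, f x ∂ρ := by
    rwa [mul_comm]
  have := (ENNReal.le_div_iff_mul_le (Or.inl hδ0) (Or.inl hδtop)).2 main'
  calc ν {z | s < ‖z‖} ≤ (d : ℝ≥0∞) * (∫⁻ x, f x ∂ρ) / ENNReal.ofReal δ := this
    _ = ENNReal.ofReal ((d : ℝ) / δ) * ∫⁻ x, f x ∂ρ := by
        rw [ENNReal.ofReal_div_of_pos hδ, ENNReal.ofReal_natCast,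
          div_eq_mul_inv, div_eq_mul_inv, mul_right_comm]
end
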